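/- There is a universal constant C > 0 with the following property. Let (X, d) be a finite metric space and δ ∈ (0, 1] be such that for every ρ > 0 there exists a finitely supported probability measure μ on partitions of X satisfying: (1) for every partition P in the support of μ and every block C ∈ P, diam(C) ≤ ρ; and (2) for every x ∈ X, E_{P ∼ μ}[ d(x, X ∖ C_P(x)) ] ≥ δρ, where C_P(x) is the block of P containing x and d(x, ∅) is interpreted as ρ. Then for every 0 < ε < 1 there exist a Hilbert space H and a map Φ : X → H such that for all x, y ∈ X, d(x,y)^{1−ε} ≤ ‖Φ(x) − Φ(y)‖ ≤ (C/(δ√ε))·d(x,y)^{1−ε}; i.e., the (1−ε)-snowflake (X, d^{1−ε}) embeds into Hilbert space with distortion at most C/(δ·√ε). -/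

import Mathlib

open scoped Classical

noncomputable section

namespace Snowflake15

variable {X : Type} [MetricSpace X] [Fintype X]

/-- representative of a set -/
def rep (x₀ : X) (S : Set X) : X := if h : S.Nonempty then h.choose else x₀

lemma rep_mem (x₀ : X) {S : Set X} (h : S.Nonempty) : rep x₀ S ∈ S := by
  rw [rep, dif_pos h]; exact h.choose_spec

/-- chain relation at scale r -/
def Rel (r : ℝ) (x y : X) : Prop := Relation.ReflTransGen (fun a b => dist a b ≤ r) x y

lemma rel_refl (r : ℝ) (x : X) : Rel r x x := Relation.ReflTransGen.refl

lemma rel_symm {r : ℝ} {x y : X} (h : Rel r x y) : Rel r y x :=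
  @Std.Symm.symm _ _ (@Relation.ReflTransGen.symmetric _ _ ⟨fun a b hab => by rwa [dist_comm]⟩) x y h

lemma rel_trans {r : ℝ} {x y z : X} (h : Rel r x y) (h' : Rel r y z) : Rel r x z :=
  Relation.ReflTransGen.trans h h'

lemma rel_of_dist_le {r : ℝ} {x y : X} (h : dist x y ≤ r) : Rel r x y :=
  Relation.ReflTransGen.single h

lemma dist_gt_of_not_rel {r : ℝ} {x y : X} (h : ¬ Rel r x y) : r < dist x y := by
  by_contra hc
  exact h (rel_of_dist_le (le_of_not_gt hc))

/-- component of x at scale r -/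
def comp (r : ℝ) (x : X) : Set X := {y | Rel r x y}

lemma mem_comp_self (r : ℝ) (x : X) : x ∈ comp r x := rel_refl r x

lemma comp_nonempty (r : ℝ) (x : X) : (comp r x).Nonempty := ⟨x, mem_comp_self r x⟩

lemma comp_eq_of_rel {r : ℝ} {x y : X} (h : Rel r x y) : comp r x = comp r y := by
  ext z
  exact ⟨fun hz => rel_trans (rel_symm h) hz, fun hz => rel_trans h hz⟩

lemma rep_comp_ne {r : ℝ} (x₀ : X) {x y : X} (h : ¬ Rel r x y) :
    rep x₀ (comp r x) ≠ rep x₀ (comp r y) := by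
  intro he
  have hx : rep x₀ (comp r x) ∈ comp r x := rep_mem x₀ (comp_nonempty r x)
  have hy : rep x₀ (comp r y) ∈ comp r y := rep_mem x₀ (comp_nonempty r y)
  rw [he] at hx
  exact h (rel_trans hx (rel_symm hy))

end Snowflake15

namespace Snowflake15
set_option linter.unusedSectionVars false

variable {X : Type} [MetricSpace X] [Fintype X]

section Blocks

variable {ρ : ℝ} {B : X → Set X}

/-- padded value of a block function -/
def uval (ρ : ℝ) (B : X → Set X) (x : X) : ℝ :=
  min (2*ρ) (if (B x)ᶜ = ∅ then ρ else Metric.infDist x (B x)ᶜ)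

lemma uval_nonneg (hρ : 0 ≤ ρ) (x : X) : 0 ≤ uval ρ B x := by
  apply le_min (by linarith)
  split
  · exact hρ
  · exact Metric.infDist_nonneg

lemma uval_le (x : X) : uval ρ B x ≤ 2*ρ := min_le_left _ _

lemma uval_lip (hpart : ∀ x y : X, y ∈ B x → B y = B x) {x y : X} (hy : y ∈ B x) :
    |uval ρ B x - uval ρ B y| ≤ dist x y := by
  have hBxy : B y = B x := hpart x y hy
  unfold uval
  rw [hBxy]
  by_cases hc : (B x)ᶜ = ∅
  · simp [hc, dist_nonneg]
  · rw [if_neg hc, if_neg hc]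
    have h1 : Metric.infDist x (B x)ᶜ ≤ Metric.infDist y (B x)ᶜ + dist x y :=
      Metric.infDist_le_infDist_add_dist
    have h2 : Metric.infDist y (B x)ᶜ ≤ Metric.infDist x (B x)ᶜ + dist x y := by
      rw [dist_comm]; exact Metric.infDist_le_infDist_add_dist
    rw [abs_le]
    constructor
    · rcases le_total (2*ρ) (Metric.infDist x (B x)ᶜ) with h | h
      · have : min (2*ρ) (Metric.infDist x (B x)ᶜ) = 2*ρ := min_eq_left h
        rw [this]
        have : min (2*ρ) (Metric.infDist y (B x)ᶜ) ≤ 2*ρ := min_le_left _ _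
        have hd := dist_nonneg (x := x) (y := y)
        linarith
      · rw [min_eq_right h]
        have : min (2*ρ) (Metric.infDist y (B x)ᶜ) ≤ Metric.infDist y (B x)ᶜ := min_le_right _ _
        linarith
    · rcases le_total (2*ρ) (Metric.infDist y (B x)ᶜ) with h | h
      · rw [min_eq_left h]
        have : min (2*ρ) (Metric.infDist x (B x)ᶜ) ≤ 2*ρ := min_le_left _ _
        have hd := dist_nonneg (x := x) (y := y)
        linarith
      · rw [min_eq_right h]
        have : min (2*ρ) (Metric.infDist x (B x)ᶜ) ≤ Metric.infDist x (B x)ᶜ := min_le_right _ _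
        linarith

lemma uval_le_dist {x y : X} (hy : y ∉ B x) : uval ρ B x ≤ dist x y := by
  have hne : (B x)ᶜ ≠ ∅ := by
    intro h
    exact hy (by simpa using (Set.compl_empty_iff.mp h) ▸ Set.mem_univ y)
  unfold uval
  rw [if_neg hne]
  exact le_trans (min_le_right _ _) (Metric.infDist_le_dist_of_mem hy)

lemma blocks_ne {x y : X} (hpart : ∀ x y : X, y ∈ B x → B y = B x)
    (hmem : ∀ x : X, x ∈ B x) (hy : y ∉ B x) : B x ≠ B y := by
  intro h
  exact hy (h ▸ hmem y)

lemma blocks_rep_ne (x₀ : X) {x y : X} (hpart : ∀ x y : X, y ∈ B x → B y = B x)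
    (hmem : ∀ x : X, x ∈ B x) (hy : y ∉ B x) : rep x₀ (B x) ≠ rep x₀ (B y) := by
  intro he
  have h1 : rep x₀ (B x) ∈ B x := rep_mem x₀ ⟨x, hmem x⟩
  have h2 : rep x₀ (B y) ∈ B y := rep_mem x₀ ⟨y, hmem y⟩
  rw [he] at h1
  have := hpart y _ h2
  have h3 := hpart x _ h1
  rw [this] at h3
  exact (blocks_ne hpart hmem hy) h3.symm

/-- Chain lemma: if y is connected to x at scale ρ but outside x's block, then the
complement of the block is within 2ρ of x. -/
lemma chain_infDist (hρ : 0 ≤ ρ)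
    (hmem : ∀ x : X, x ∈ B x) {x y : X} (hdiam : Metric.diam (B x) ≤ ρ)
    (hrel : Rel ρ x y) (hy : y ∉ B x) :
    Metric.infDist x (B x)ᶜ ≤ 2*ρ := by
  have key : ∀ w : X, Rel ρ x w → (w ∈ B x ∨ Metric.infDist x (B x)ᶜ ≤ 2*ρ) := by
    intro w hw
    induction hw with
    | refl => exact Or.inl (hmem x)
    | tail hab hbc ih =>
      rename_i b c
      rcases ih with hb | hb
      · by_cases hc : c ∈ B x
        · exact Or.inl hc
        · right
          have h1 : Metric.infDist x (B x)ᶜ ≤ dist x c := Metric.infDist_le_dist_of_mem hc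
          have h2 : dist x c ≤ dist x b + dist b c := dist_triangle x b c
          have h3 : dist x b ≤ Metric.diam (B x) :=
            Metric.dist_le_diam_of_mem (Set.toFinite (B x)).isBounded (hmem x) hb
          linarith
      · exact Or.inr hb
  rcases key y hrel with h | h
  · exact absurd h hy
  · exact h

end Blocks

end Snowflake15

namespace Snowflake15
set_option linter.unusedSectionVars false

lemma sum_ite_sq {X : Type} [Fintype X] (r₁ r₂ : X) (A B : ℝ) :
    ∑ z : X, ((if z = r₁ then A else 0) - (if z = r₂ then B else 0))^2
      = if r₁ = r₂ then (A-B)^2 else A^2 + B^2 := by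
  classical
  by_cases h : r₁ = r₂
  · subst h
    rw [if_pos rfl]
    have e : ∀ z : X, ((if z = r₁ then A else 0) - (if z = r₁ then B else 0))^2
        = if z = r₁ then (A-B)^2 else 0 := by
      intro z; split_ifs <;> ring
    rw [Finset.sum_congr rfl (fun z _ => e z), Finset.sum_ite_eq' Finset.univ r₁ (fun _ => (A-B)^2),
      if_pos (Finset.mem_univ r₁)]
  · rw [if_neg h]
    have e : ∀ z : X, ((if z = r₁ then A else 0) - (if z = r₂ then B else 0))^2
        = (if z = r₁ then A^2 else 0) + (if z = r₂ then B^2 else 0) := by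
      intro z
      split_ifs with h1 h2 h2
      · exact absurd (h1 ▸ h2) h
      · ring
      · ring
      · ring
    rw [Finset.sum_congr rfl (fun z _ => e z), Finset.sum_add_distrib,
      Finset.sum_ite_eq' Finset.univ r₁ (fun _ => A^2),
      Finset.sum_ite_eq' Finset.univ r₂ (fun _ => B^2),
      if_pos (Finset.mem_univ r₁), if_pos (Finset.mem_univ r₂)]

lemma partial_geom_le {x : ℝ} (h0 : 0 ≤ x) (h1 : x < 1) (n : ℕ) :
    ∑ k ∈ Finset.range n, x ^ k ≤ 1/(1-x) := by
  have hx1 : x ≠ 1 := ne_of_lt h1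
  rw [geom_sum_eq hx1]
  have e : (x^n - 1)/(x-1) = (1 - x^n)/(1-x) := by
    rw [show (1 - x^n) = -(x^n - 1) by ring, show (1-x) = -(x-1) by ring, neg_div_neg_eq]
  rw [e]
  have hxn : 0 ≤ x ^ n := by positivity
  gcongr
  · linarith

lemma sum_zpow_le_of_le {r : ℝ} (hr : 1 < r) (T : Finset ℤ) (M : ℤ) (hT : ∀ t ∈ T, t ≤ M) :
    ∑ t ∈ T, r ^ t ≤ r ^ M * (r / (r-1)) := by
  have hr0 : 0 < r := by linarith
  have hx0 : (0:ℝ) ≤ r⁻¹ := by positivity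
  have hx1 : r⁻¹ < 1 := by
    rw [inv_eq_one_div, div_lt_one hr0]; exact hr
  have step : ∑ t ∈ T, r ^ t = r ^ M * ∑ t ∈ T, (r⁻¹) ^ ((M - t).toNat) := by
    rw [Finset.mul_sum]
    refine Finset.sum_congr rfl (fun t ht => ?_)
    have hMt : (0:ℤ) ≤ M - t := by linarith [hT t ht]
    have e : ((r⁻¹) ^ ((M - t).toNat) : ℝ) = r ^ (t - M) := by
      rw [← zpow_natCast, Int.toNat_of_nonneg hMt, inv_zpow, ← zpow_neg, neg_sub]
    rw [e, ← zpow_add₀ (ne_of_gt hr0)]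
    congr 1
    omega
  rw [step]
  have inj : ∀ x ∈ T, ∀ y ∈ T, (M - x).toNat = (M - y).toNat → x = y := by
    intro a ha b hb hab
    have h1 := hT a ha; have h2 := hT b hb
    omega
  have e2 : ∑ t ∈ T, (r⁻¹) ^ ((M - t).toNat)
      = ∑ k ∈ T.image (fun t => (M - t).toNat), (r⁻¹) ^ k :=
    (Finset.sum_image inj).symm
  obtain ⟨n, hn⟩ := Finset.exists_nat_subset_range (T.image (fun t => (M - t).toNat))
  have e3 : ∑ k ∈ T.image (fun t => (M-t).toNat), (r⁻¹)^k ≤ ∑ k ∈ Finset.range n, (r⁻¹)^k :=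
    Finset.sum_le_sum_of_subset_of_nonneg hn (fun k _ _ => by positivity)
  have e4 := partial_geom_le hx0 hx1 n
  have hfinal : (1:ℝ)/(1 - r⁻¹) = r/(r-1) := by
    have h2 : 1 - r⁻¹ = (r-1)/r := by
      field_simp
    rw [h2, one_div_div]
  calc r^M * ∑ t ∈ T, (r⁻¹)^((M-t).toNat) ≤ r^M * (1/(1-r⁻¹)) := by
        refine mul_le_mul_of_nonneg_left ?_ (le_of_lt (zpow_pos hr0 M))
        rw [e2]; exact le_trans e3 e4
    _ = r^M * (r/(r-1)) := by rw [hfinal]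

lemma sum_zpow_neg_le_of_ge {r : ℝ} (hr : 1 < r) (T : Finset ℤ) (M : ℤ) (hT : ∀ t ∈ T, M ≤ t) :
    ∑ t ∈ T, r ^ (-t) ≤ r ^ (-M) * (r / (r-1)) := by
  have := sum_zpow_le_of_le hr (T.image (fun t => -t)) (-M)
    (by intro t ht; simp only [Finset.mem_image] at ht; obtain ⟨a, ha, rfl⟩ := ht
        have := hT a ha; omega)
  rw [Finset.sum_image (by intro a _ b _ h; have h' : -a = -b := h; omega)] at this
  exact this

end Snowflake15

namespace Snowflake15
set_option linter.unusedSectionVars false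

section Arith

variable {ε : ℝ}

/-- the base of the geometric scales -/
def Lam (ε : ℝ) : ℝ := (2:ℝ) ^ (1/(2*(1-ε)))

lemma Lam_pos : 0 < Lam ε := Real.rpow_pos_of_pos two_pos _

lemma Lam_one_lt (hε1 : ε < 1) : 1 < Lam ε := by
  rw [Lam, Real.one_lt_rpow_iff_of_pos two_pos]
  left
  have : (0:ℝ) < 1 - ε := by linarith
  constructor
  · norm_num
  · positivity

lemma Lam_zpow_pos (t : ℤ) : 0 < (Lam ε)^t := zpow_pos Lam_pos t

lemma Lam_zpow_eq (hε1 : ε < 1) (t : ℤ) :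
    (Lam ε)^t = (2:ℝ)^((t:ℝ)/(2*(1-ε))) := by
  rw [← Real.rpow_intCast (Lam ε) t, Lam, ← Real.rpow_mul (by norm_num)]
  congr 1
  ring

lemma Lam_zpow_rpow (hε1 : ε < 1) (t : ℤ) (y : ℝ) :
    ((Lam ε)^t)^y = (2:ℝ)^((t:ℝ)*y/(2*(1-ε))) := by
  rw [Lam_zpow_eq hε1, ← Real.rpow_mul (by norm_num)]
  congr 1
  ring

/-- scale weight -/
def aw (ε : ℝ) (t : ℤ) : ℝ := ((Lam ε)^t)^(-ε)

lemma aw_pos (t : ℤ) : 0 < aw ε t := Real.rpow_pos_of_pos (Lam_zpow_pos t) _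

lemma I1 (hε1 : ε < 1) (t : ℤ) : (aw ε t)^2 * (2*(Lam ε)^t)^2 = 4 * (2:ℝ)^t := by
  have hα : (1:ℝ) - ε ≠ 0 := by intro h; linarith [h]
  have h2 : (2*(Lam ε)^t)^2 = 4 * ((Lam ε)^t)^((2:ℝ)) := by
    rw [mul_pow, ← Real.rpow_natCast ((Lam ε)^t) 2]
    norm_num
  rw [aw, h2, ← Real.rpow_natCast (((Lam ε)^t)^(-ε)) 2, ← Real.rpow_mul (le_of_lt (Lam_zpow_pos t))]
  rw [Lam_zpow_rpow hε1, Lam_zpow_rpow hε1, ← Real.rpow_intCast 2 t]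
  have hcomb : ∀ a b : ℝ, (2:ℝ)^a * (4 * (2:ℝ)^b) = 4 * (2:ℝ)^(a+b) := by
    intro a b; rw [Real.rpow_add two_pos]; ring
  rw [hcomb]
  have hα2 : (0:ℝ) < 2*(1-ε) := by linarith
  have he : (t:ℝ) * (-ε * ((2:ℕ):ℝ)) / (2 * (1 - ε)) + (t:ℝ) * 2 / (2 * (1 - ε)) = (t:ℝ) := by
    push_cast
    rw [← add_div, div_eq_iff (ne_of_gt hα2)]
    ring
  rw [he]

lemma I2 (hε1 : ε < 1) (t : ℤ) : aw ε t * (Lam ε)^t = ((Lam ε)^t)^(1-ε) := by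
  have h := Lam_zpow_pos (ε := ε) t
  rw [aw]
  nth_rewrite 2 [show (Lam ε)^t = ((Lam ε)^t)^(1:ℝ) from (Real.rpow_one _).symm]
  rw [← Real.rpow_add h]
  congr 1
  ring

lemma I3 (hε1 : ε < 1) (t : ℤ) : (aw ε t)^2 = ((2:ℝ)^(ε/(1-ε)))^(-t) := by
  have hα : (1:ℝ) - ε ≠ 0 := by intro h; linarith [h]
  rw [aw, ← Real.rpow_natCast (((Lam ε)^t)^(-ε)) 2, ← Real.rpow_mul (le_of_lt (Lam_zpow_pos t)),
    Lam_zpow_rpow hε1]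
  rw [← Real.rpow_intCast ((2:ℝ)^(ε/(1-ε))) (-t), ← Real.rpow_mul (by norm_num)]
  congr 1
  push_cast
  field_simp

lemma I4 (hε0 : 0 < ε) (hε1 : ε < 1) : 1 < (2:ℝ)^(ε/(1-ε)) := by
  rw [Real.one_lt_rpow_iff_of_pos two_pos]
  left
  have : (0:ℝ) < 1 - ε := by linarith
  constructor
  · norm_num
  · positivity

lemma I5 (hε1 : ε < 1) (t : ℤ) : ((Lam ε)^t)^(2-2*ε) = (2:ℝ)^t := by
  have hα : (1:ℝ) - ε ≠ 0 := by intro h; linarith [h]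
  rw [Lam_zpow_rpow hε1, ← Real.rpow_intCast 2 t]
  congr 1
  have hα2 : (0:ℝ) < 2*(1-ε) := by linarith
  rw [div_eq_iff (ne_of_gt hα2)]
  ring

end Arith

end Snowflake15

namespace Snowflake15
set_option linter.unusedSectionVars false

section Arith2

variable {ε : ℝ}

lemma ratio_bound (hε0 : 0 < ε) (hε1 : ε < 1) :
    (2:ℝ)^(ε/(1-ε)) / ((2:ℝ)^(ε/(1-ε)) - 1) ≤ 6/ε := by
  set x := ε/(1-ε) with hxdef
  have hα : (0:ℝ) < 1 - ε := by linarith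
  have hx0 : 0 < x := by positivity
  have hxε : ε ≤ x := by
    rw [hxdef, le_div_iff₀ hα]
    nlinarith
  set r := (2:ℝ)^x with hrdef
  have hlog : (1:ℝ)/2 ≤ Real.log 2 := by
    have := Real.log_two_gt_d9
    linarith
  have h2x : 1 + x/2 ≤ r := by
    rw [hrdef, Real.rpow_def_of_pos two_pos]
    have h1 : x/2 ≤ Real.log 2 * x := by nlinarith
    have h2 := Real.add_one_le_exp (Real.log 2 * x)
    linarith
  have hr1 : ε/2 ≤ r - 1 := by linarith
  have hr1pos : (0:ℝ) < r - 1 := by linarith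
  have e : r/(r-1) = 1 + 1/(r-1) := by field_simp; ring
  have h3 : 1/(r-1) ≤ 2/ε := by
    have := one_div_le_one_div_of_le (by linarith : (0:ℝ) < ε/2) hr1
    rwa [one_div_div] at this
  rw [e]
  have h4 : (1:ℝ) ≤ 1/ε := by rw [le_div_iff₀ hε0]; linarith
  have e2 : (2:ℝ)/ε = 2*(1/ε) := by ring
  have e3 : (6:ℝ)/ε = 6*(1/ε) := by ring
  rw [e2] at h3
  rw [e3]
  linarith

lemma sqrt_two_le : Real.sqrt 2 ≤ 3/2 := by
  have hs := Real.sq_sqrt (by norm_num : (0:ℝ) ≤ 2)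
  have hnn := Real.sqrt_nonneg 2
  nlinarith

lemma twoLam_rpow_le (hε0 : 0 < ε) (hε1 : ε < 1) : (2*Lam ε)^(1-ε) ≤ 3 := by
  have hα : (0:ℝ) < 1 - ε := by linarith
  have hL := Lam_pos (ε := ε)
  rw [Real.mul_rpow (by norm_num) (le_of_lt hL)]
  have b1 : (2:ℝ)^(1-ε) ≤ 2 := by
    nth_rewrite 2 [show (2:ℝ) = (2:ℝ)^(1:ℝ) from (Real.rpow_one 2).symm]
    exact Real.rpow_le_rpow_of_exponent_le one_le_two (by linarith)
  have b2 : (Lam ε)^(1-ε) = Real.sqrt 2 := by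
    rw [Lam, ← Real.rpow_mul (by norm_num), Real.sqrt_eq_rpow]
    congr 1
    field_simp
  rw [b2]
  have h1 : (0:ℝ) ≤ (2:ℝ)^(1-ε) := Real.rpow_nonneg (by norm_num) _
  nlinarith [sqrt_two_le, Real.sqrt_nonneg 2]

lemma lower_scale (hε0 : 0 < ε) (hε1 : ε < 1) {d ρt : ℝ} (hd : 0 < d) (hρt : 0 < ρt)
    (h : d/(2*Lam ε) ≤ ρt) : d^(1-ε) ≤ 3 * ρt^(1-ε) := by
  have hα : (0:ℝ) < 1 - ε := by linarith
  have hL := Lam_pos (ε := ε)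
  have h2L : (0:ℝ) < 2*Lam ε := by linarith
  have e1 : d = (2*Lam ε) * (d/(2*Lam ε)) := by field_simp
  calc d^(1-ε) = ((2*Lam ε) * (d/(2*Lam ε)))^(1-ε) := by rw [← e1]
    _ = (2*Lam ε)^(1-ε) * (d/(2*Lam ε))^(1-ε) :=
        Real.mul_rpow (le_of_lt h2L) (by positivity)
    _ ≤ 3 * ρt^(1-ε) := by
        apply mul_le_mul (twoLam_rpow_le hε0 hε1)
          (Real.rpow_le_rpow (by positivity) h (le_of_lt hα))
          (Real.rpow_nonneg (by positivity) _) (by norm_num)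

end Arith2

end Snowflake15

namespace Snowflake15
set_option linter.unusedSectionVars false

section PerScale

variable {X : Type} [MetricSpace X] [Fintype X] {ι : Type} [Fintype ι]
variable (x₀ : X) (ρ : ℝ) (wt : ι → ℝ) (c : ι → X → Set X)

/-- random-partition coordinate -/
def gcoord (i : ι) (z x : X) : ℝ :=
  Real.sqrt (wt i) * (if z = rep x₀ (c i x) then uval ρ (c i) x else 0)

/-- component coordinate -/
def kcoord (z x : X) : ℝ := if z = rep x₀ (comp ρ x) then ρ else 0

lemma gsum_eq (hw0 : ∀ i, 0 ≤ wt i)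
    (hmem : ∀ i (x : X), x ∈ c i x) (hpart : ∀ i (x y : X), y ∈ c i x → c i y = c i x)
    (i : ι) (x y : X) :
    ∑ z : X, (gcoord x₀ ρ wt c i z x - gcoord x₀ ρ wt c i z y)^2
      = wt i * (if y ∈ c i x then (uval ρ (c i) x - uval ρ (c i) y)^2
                 else (uval ρ (c i) x)^2 + (uval ρ (c i) y)^2) := by
  have e : ∀ z : X, (gcoord x₀ ρ wt c i z x - gcoord x₀ ρ wt c i z y)^2
      = wt i * ((if z = rep x₀ (c i x) then uval ρ (c i) x else 0)
          - (if z = rep x₀ (c i y) then uval ρ (c i) y else 0))^2 := by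
    intro z
    unfold gcoord
    rw [show Real.sqrt (wt i) * (if z = rep x₀ (c i x) then uval ρ (c i) x else 0)
          - Real.sqrt (wt i) * (if z = rep x₀ (c i y) then uval ρ (c i) y else 0)
        = Real.sqrt (wt i) * ((if z = rep x₀ (c i x) then uval ρ (c i) x else 0)
          - (if z = rep x₀ (c i y) then uval ρ (c i) y else 0)) from by ring]
    rw [mul_pow, Real.sq_sqrt (hw0 i)]
  rw [Finset.sum_congr rfl (fun z _ => e z), ← Finset.mul_sum, sum_ite_sq]
  congr 1
  by_cases hy : y ∈ c i x
  · have hcc : c i y = c i x := hpart i x y hy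
    rw [if_pos, if_pos hy]
    rw [hcc]
  · rw [if_neg, if_neg hy]
    exact blocks_rep_ne x₀ (fun a b => hpart i a b) (hmem i) hy

lemma gsum_upper (hw0 : ∀ i, 0 ≤ wt i) (hw1 : ∑ i, wt i = 1) (hρ : 0 ≤ ρ)
    (hmem : ∀ i (x : X), x ∈ c i x) (hpart : ∀ i (x y : X), y ∈ c i x → c i y = c i x)
    (x y : X) :
    ∑ i, ∑ z : X, (gcoord x₀ ρ wt c i z x - gcoord x₀ ρ wt c i z y)^2
      ≤ 2 * (min (dist x y) (2*ρ))^2 := by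
  have key : ∀ i, ∑ z : X, (gcoord x₀ ρ wt c i z x - gcoord x₀ ρ wt c i z y)^2
      ≤ wt i * (2 * (min (dist x y) (2*ρ))^2) := by
    intro i
    rw [gsum_eq x₀ ρ wt c hw0 hmem hpart i x y]
    apply mul_le_mul_of_nonneg_left _ (hw0 i)
    by_cases hy : y ∈ c i x
    · rw [if_pos hy]
      have h1 : |uval ρ (c i) x - uval ρ (c i) y| ≤ dist x y :=
        uval_lip (fun a b => hpart i a b) hy
      have h2 : |uval ρ (c i) x - uval ρ (c i) y| ≤ 2*ρ := by
        have b1 := uval_nonneg (B := c i) hρ x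
        have b2 := uval_nonneg (B := c i) hρ y
        have b3 := uval_le (ρ := ρ) (B := c i) x
        have b4 := uval_le (ρ := ρ) (B := c i) y
        rw [abs_le]; constructor <;> linarith
      have h3 : |uval ρ (c i) x - uval ρ (c i) y| ≤ min (dist x y) (2*ρ) := le_min h1 h2
      have h4 : (uval ρ (c i) x - uval ρ (c i) y)^2 ≤ (min (dist x y) (2*ρ))^2 := by
        rw [← sq_abs]
        apply pow_le_pow_left₀ (abs_nonneg _) h3
      have h5 : (0:ℝ) ≤ (min (dist x y) (2*ρ))^2 := sq_nonneg _
      linarith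
    · rw [if_neg hy]
      have hx' : x ∉ c i y := by
        intro hx
        exact hy ((hpart i y x hx) ▸ hmem i y)
      have h1 : uval ρ (c i) x ≤ min (dist x y) (2*ρ) :=
        le_min (uval_le_dist hy) (uval_le x)
      have h2 : uval ρ (c i) y ≤ min (dist x y) (2*ρ) := by
        refine le_min ?_ (uval_le y)
        rw [dist_comm]
        exact uval_le_dist hx'
      have b1 := uval_nonneg (B := c i) hρ x
      have b2 := uval_nonneg (B := c i) hρ y
      nlinarith
  calc ∑ i, ∑ z : X, (gcoord x₀ ρ wt c i z x - gcoord x₀ ρ wt c i z y)^2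
      ≤ ∑ i, wt i * (2 * (min (dist x y) (2*ρ))^2) := Finset.sum_le_sum (fun i _ => key i)
    _ = 2 * (min (dist x y) (2*ρ))^2 := by rw [← Finset.sum_mul, hw1, one_mul]

lemma gsum_lower (hw0 : ∀ i, 0 ≤ wt i) (hw1 : ∑ i, wt i = 1) (hρ : 0 < ρ)
    (hmem : ∀ i (x : X), x ∈ c i x) (hpart : ∀ i (x y : X), y ∈ c i x → c i y = c i x)
    {x y : X} (hd : ∀ i, y ∉ c i x) (hrel : Rel ρ x y)
    (hdiam : ∀ i, Metric.diam (c i x) ≤ ρ) {δ : ℝ} (hδ : 0 ≤ δ)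
    (hpad : δ * ρ ≤ ∑ i, wt i * (if (c i x)ᶜ = ∅ then ρ else Metric.infDist x (c i x)ᶜ)) :
    (δ*ρ)^2 ≤ ∑ i, ∑ z : X, (gcoord x₀ ρ wt c i z x - gcoord x₀ ρ wt c i z y)^2 := by
  have key : ∀ i, uval ρ (c i) x = (if (c i x)ᶜ = ∅ then ρ else Metric.infDist x (c i x)ᶜ) := by
    intro i
    have hne : (c i x)ᶜ ≠ ∅ := by
      intro h
      have : y ∈ (c i x)ᶜ := hd i
      rw [h] at this
      exact this
    rw [if_neg hne]
    unfold uval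
    rw [if_neg hne]
    exact min_eq_right (chain_infDist (le_of_lt hρ) (hmem i) (hdiam i) hrel (hd i))
  have hsum : δ * ρ ≤ ∑ i, wt i * uval ρ (c i) x := by
    rw [Finset.sum_congr rfl (fun i _ => by rw [key i])]
    exact hpad
  have cs : (∑ i, wt i * uval ρ (c i) x)^2 ≤ ∑ i, wt i * (uval ρ (c i) x)^2 := by
    have h := Finset.sum_mul_sq_le_sq_mul_sq Finset.univ (fun i => Real.sqrt (wt i))
      (fun i => Real.sqrt (wt i) * uval ρ (c i) x)
    have e1 : ∀ i : ι, Real.sqrt (wt i) * (Real.sqrt (wt i) * uval ρ (c i) x)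
        = wt i * uval ρ (c i) x := by
      intro i
      rw [← mul_assoc, Real.mul_self_sqrt (hw0 i)]
    have e2 : ∀ i : ι, (Real.sqrt (wt i))^2 = wt i := fun i => Real.sq_sqrt (hw0 i)
    have e3 : ∀ i : ι, (Real.sqrt (wt i) * uval ρ (c i) x)^2 = wt i * (uval ρ (c i) x)^2 := by
      intro i
      rw [mul_pow, e2 i]
    rw [Finset.sum_congr rfl (fun i _ => e1 i), Finset.sum_congr rfl (fun i _ => e2 i),
      Finset.sum_congr rfl (fun i _ => e3 i), hw1, one_mul] at h
    exact h
  have step : ∀ i, wt i * (uval ρ (c i) x)^2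
      ≤ ∑ z : X, (gcoord x₀ ρ wt c i z x - gcoord x₀ ρ wt c i z y)^2 := by
    intro i
    rw [gsum_eq x₀ ρ wt c hw0 hmem hpart i x y, if_neg (hd i)]
    have h1 : (0:ℝ) ≤ (uval ρ (c i) y)^2 := sq_nonneg _
    have h2 : (0:ℝ) ≤ wt i := hw0 i
    nlinarith
  have h0 : 0 ≤ δ * ρ := by positivity
  calc (δ*ρ)^2 ≤ (∑ i, wt i * uval ρ (c i) x)^2 := pow_le_pow_left₀ h0 hsum 2
    _ ≤ ∑ i, wt i * (uval ρ (c i) x)^2 := cs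
    _ ≤ ∑ i, ∑ z : X, (gcoord x₀ ρ wt c i z x - gcoord x₀ ρ wt c i z y)^2 :=
        Finset.sum_le_sum (fun i _ => step i)

lemma ksum_eq (x y : X) :
    ∑ z : X, (kcoord x₀ ρ z x - kcoord x₀ ρ z y)^2
      = if Rel ρ x y then 0 else 2*ρ^2 := by
  unfold kcoord
  rw [sum_ite_sq]
  by_cases h : Rel ρ x y
  · rw [if_pos, if_pos h]
    · ring
    · rw [comp_eq_of_rel h]
  · rw [if_neg, if_neg h]
    · ring
    · exact rep_comp_ne x₀ h

end PerScale

end Snowflake15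

namespace Snowflake15
set_option linter.unusedSectionVars false
set_option maxHeartbeats 1000000

lemma le_of_sq_le_sq {a b : ℝ} (hb : 0 ≤ b) (h : a^2 ≤ b^2) : a ≤ b := by nlinarith

lemma I6 {ε : ℝ} (hε0 : 0 < ε) (hε1 : ε < 1) {d : ℝ} (hd : 0 < d) {t : ℤ}
    (h : d ≤ (Lam ε)^t) : ((2:ℝ)^(ε/(1-ε)))^(-t) ≤ d^(-(2*ε)) := by
  have hα : (0:ℝ) < 1 - ε := by linarith
  have e : ((2:ℝ)^(ε/(1-ε)))^(-t) = ((Lam ε)^t)^(-(2*ε)) := by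
    rw [Lam_zpow_rpow hε1, ← Real.rpow_intCast ((2:ℝ)^(ε/(1-ε))) (-t),
      ← Real.rpow_mul (by norm_num)]
    have he : ε/(1-ε) * ((-t : ℤ) : ℝ) = (t:ℝ) * (-(2*ε))/(2*(1-ε)) := by
      push_cast
      field_simp
    rw [he]
  rw [e]
  exact Real.rpow_le_rpow_of_nonpos hd h (by linarith)

end Snowflake15

namespace Snowflake15
set_option linter.unusedSectionVars false
set_option maxHeartbeats 1000000

theorem main {X : Type} [MetricSpace X] [Fintype X] (x₀ : X) (δ ε : ℝ)
    (hδ0 : 0 < δ) (hδ1 : δ ≤ 1) (hε0 : 0 < ε) (hε1 : ε < 1)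
    (ι : ℤ → Type) [∀ t, Fintype (ι t)] (wt : ∀ t, ι t → ℝ)
    (c : ∀ t, ι t → X → Set X)
    (hw0 : ∀ t i, 0 ≤ wt t i)
    (hw1 : ∀ t, ∑ i, wt t i = 1)
    (hmem : ∀ t i (x : X), x ∈ c t i x)
    (hpart : ∀ t i (x y : X), y ∈ c t i x → c t i y = c t i x)
    (hdiam : ∀ t i (x : X), Metric.diam (c t i x) ≤ (Lam ε)^t)
    (hpad : ∀ t (x : X), δ * (Lam ε)^t ≤ ∑ i, wt t i *
        (if (c t i x)ᶜ = ∅ then (Lam ε)^t else Metric.infDist x (c t i x)ᶜ)) :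
    ∃ (H : Type) (_ : NormedAddCommGroup H) (_ : InnerProductSpace ℝ H)
      (_ : CompleteSpace H) (Φ : X → H),
      ∀ x y : X,
        dist x y ^ (1 - ε) ≤ ‖Φ x - Φ y‖ ∧
        ‖Φ x - Φ y‖ ≤ (24 / (δ * Real.sqrt ε)) * dist x y ^ (1 - ε) := by
  classical
  have hΛ1 : 1 < Lam ε := Lam_one_lt hε1
  have hΛ0 : 0 < Lam ε := Lam_pos
  have hρpos : ∀ t : ℤ, 0 < (Lam ε)^t := Lam_zpow_pos
  have hα : (0:ℝ) < 1-ε := by linarith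
  -- scale selection for pairs
  have htau : ∀ x y : X, 0 < dist x y →
      ∃ t : ℤ, (Lam ε)^t ≤ dist x y/2 ∧ dist x y/2 < (Lam ε)^(t+1) := by
    intro x y hd
    obtain ⟨n, hn⟩ := exists_mem_Ico_zpow (by linarith : 0 < dist x y / 2) hΛ1
    exact ⟨n, hn.1, hn.2⟩
  choose! τ hτ1 hτ2 using htau
  set T : Finset ℤ := Finset.image (fun p : X × X => τ p.1 p.2) Finset.univ with hTdef
  have hτT : ∀ x y : X, τ x y ∈ T := fun x y =>
    Finset.mem_image.mpr ⟨(x,y), Finset.mem_univ _, rfl⟩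
  -- the index type and the embedding
  let J := Σ t : {t : ℤ // t ∈ T}, ((ι (t:ℤ) × X) ⊕ X)
  let Φ0 : X → EuclideanSpace ℝ J := fun x =>
    WithLp.toLp 2 fun (j : J) => aw ε (j.1 : ℤ) *
      (Sum.elim (fun p : ι (j.1:ℤ) × X =>
          gcoord x₀ ((Lam ε)^(j.1:ℤ)) (wt (j.1:ℤ)) (c (j.1:ℤ)) p.1 p.2 x)
        (fun z : X => kcoord x₀ ((Lam ε)^(j.1:ℤ)) z x) j.2)
  -- per-scale square sums
  set Qg : ℤ → X → X → ℝ := fun t x y => ∑ i : ι t, ∑ z : X,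
      (gcoord x₀ ((Lam ε)^t) (wt t) (c t) i z x
        - gcoord x₀ ((Lam ε)^t) (wt t) (c t) i z y)^2 with hQgdef
  set Qk : ℤ → X → X → ℝ := fun t x y => ∑ z : X,
      (kcoord x₀ ((Lam ε)^t) z x - kcoord x₀ ((Lam ε)^t) z y)^2 with hQkdef
  have hQgnn : ∀ t x y, 0 ≤ Qg t x y := fun t x y =>
    Finset.sum_nonneg fun i _ => Finset.sum_nonneg fun z _ => sq_nonneg _
  have hQknn : ∀ t x y, 0 ≤ Qk t x y := fun t x y =>
    Finset.sum_nonneg fun z _ => sq_nonneg _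
  -- the norm identity
  have hnormsq : ∀ x y : X, ‖Φ0 x - Φ0 y‖^2
      = ∑ t ∈ T, (aw ε t)^2 * (Qg t x y + Qk t x y) := by
    intro x y
    have h1 : ‖Φ0 x - Φ0 y‖^2 = ∑ j : J, ((Φ0 x) j - (Φ0 y) j)^2 := by
      rw [EuclideanSpace.norm_eq]
      rw [Real.sq_sqrt (Finset.sum_nonneg fun j _ => by positivity)]
      refine Finset.sum_congr rfl fun j _ => ?_
      rw [show (Φ0 x - Φ0 y) j = (Φ0 x) j - (Φ0 y) j from rfl, Real.norm_eq_abs, sq_abs]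
    rw [h1, ← Finset.univ_sigma_univ, Finset.sum_sigma, ← Finset.sum_coe_sort T]
    refine Finset.sum_congr rfl fun t _ => ?_
    rw [Fintype.sum_sum_type]
    have hfac : ∀ A B : ℝ, (aw ε (t:ℤ) * A - aw ε (t:ℤ) * B)^2 = (aw ε (t:ℤ))^2 * (A - B)^2 :=
      fun A B => by ring
    have e1 : ∑ p : ι (t:ℤ) × X,
        ((Φ0 x) ⟨t, Sum.inl p⟩ - (Φ0 y) ⟨t, Sum.inl p⟩)^2
        = (aw ε (t:ℤ))^2 * Qg (t:ℤ) x y := by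
      rw [hQgdef, Finset.mul_sum]
      rw [Fintype.sum_prod_type]
      refine Finset.sum_congr rfl fun i _ => ?_
      rw [Finset.mul_sum]
      refine Finset.sum_congr rfl fun z _ => ?_
      exact hfac _ _
    have e2 : ∑ z : X, ((Φ0 x) ⟨t, Sum.inr z⟩ - (Φ0 y) ⟨t, Sum.inr z⟩)^2
        = (aw ε (t:ℤ))^2 * Qk (t:ℤ) x y := by
      rw [hQkdef, Finset.mul_sum]
      refine Finset.sum_congr rfl fun z _ => ?_
      exact hfac _ _
    rw [e1, e2, mul_add]
  -- upper bound
  have upper : ∀ x y : X, x ≠ y → ‖Φ0 x - Φ0 y‖ ≤ (8/Real.sqrt ε) * dist x y ^ (1-ε) := by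
    intro x y hxy
    have hd : 0 < dist x y := dist_pos.mpr hxy
    obtain ⟨M, hM⟩ := exists_mem_Ico_zpow hd hΛ1
    obtain ⟨hM1, hM2⟩ := hM
    have hQ : ∀ t : ℤ, Qg t x y + Qk t x y ≤ 4 * (min (dist x y) (2*(Lam ε)^t))^2 := by
      intro t
      have h1 : Qg t x y ≤ 2 * (min (dist x y) (2*(Lam ε)^t))^2 := by
        simp only [hQgdef]
        exact gsum_upper x₀ _ _ _ (hw0 t) (hw1 t) (le_of_lt (hρpos t)) (hmem t) (hpart t) x y
      have h2 : Qk t x y ≤ 2 * (min (dist x y) (2*(Lam ε)^t))^2 := by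
        simp only [hQkdef]
        rw [ksum_eq]
        by_cases hrel : Rel ((Lam ε)^t) x y
        · rw [if_pos hrel]; positivity
        · rw [if_neg hrel]
          have h3 : (Lam ε)^t < dist x y := dist_gt_of_not_rel hrel
          have h4 : (Lam ε)^t ≤ min (dist x y) (2*(Lam ε)^t) :=
            le_min (le_of_lt h3) (by nlinarith [hρpos t])
          have h5 : ((Lam ε)^t)^2 ≤ (min (dist x y) (2*(Lam ε)^t))^2 :=
            pow_le_pow_left₀ (le_of_lt (hρpos t)) h4 2
          linarith
      linarith
    have hperA : ∀ t ∈ T.filter (fun t => t ≤ M),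
        (aw ε t)^2 * (Qg t x y + Qk t x y) ≤ 16 * (2:ℝ)^t := by
      intro t _
      have h1 := hQ t
      have h2 : (min (dist x y) (2*(Lam ε)^t))^2 ≤ (2*(Lam ε)^t)^2 :=
        pow_le_pow_left₀ (le_min dist_nonneg (by positivity)) (min_le_right _ _) 2
      have h3 : (aw ε t)^2 * (Qg t x y + Qk t x y) ≤ (aw ε t)^2 * (4 * (2*(Lam ε)^t)^2) := by
        apply mul_le_mul_of_nonneg_left _ (sq_nonneg _)
        linarith
      have h4 : (aw ε t)^2 * (4 * (2*(Lam ε)^t)^2) = 4 * ((aw ε t)^2 * (2*(Lam ε)^t)^2) := by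
        ring
      rw [h4, I1 hε1 t] at h3
      linarith
    have hperB : ∀ t ∈ T.filter (fun t => ¬ t ≤ M),
        (aw ε t)^2 * (Qg t x y + Qk t x y) ≤ 4 * (dist x y)^2 * ((2:ℝ)^(ε/(1-ε)))^(-t) := by
      intro t _
      have h1 := hQ t
      have h2 : (min (dist x y) (2*(Lam ε)^t))^2 ≤ (dist x y)^2 :=
        pow_le_pow_left₀ (le_min dist_nonneg (by positivity)) (min_le_left _ _) 2
      have h3 : (aw ε t)^2 * (Qg t x y + Qk t x y) ≤ (aw ε t)^2 * (4 * (dist x y)^2) := by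
        apply mul_le_mul_of_nonneg_left _ (sq_nonneg _)
        linarith
      calc (aw ε t)^2 * (Qg t x y + Qk t x y)
          ≤ (aw ε t)^2 * (4 * (dist x y)^2) := h3
        _ = 4 * (dist x y)^2 * ((2:ℝ)^(ε/(1-ε)))^(-t) := by rw [I3 hε1 t]; ring
    have hsumA : ∑ t ∈ T.filter (fun t => t ≤ M), (aw ε t)^2 * (Qg t x y + Qk t x y)
        ≤ 32 * (dist x y)^(2-2*ε) := by
      calc ∑ t ∈ T.filter (fun t => t ≤ M), (aw ε t)^2 * (Qg t x y + Qk t x y)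
          ≤ ∑ t ∈ T.filter (fun t => t ≤ M), 16*(2:ℝ)^t := Finset.sum_le_sum hperA
        _ = 16 * ∑ t ∈ T.filter (fun t => t ≤ M), (2:ℝ)^t := by rw [Finset.mul_sum]
        _ ≤ 16 * ((2:ℝ)^M * (2/(2-1))) := by
            apply mul_le_mul_of_nonneg_left _ (by norm_num)
            exact sum_zpow_le_of_le (by norm_num) _ M
              (fun t ht => (Finset.mem_filter.mp ht).2)
        _ = 32 * (2:ℝ)^M := by ring
        _ ≤ 32 * (dist x y)^(2-2*ε) := by
            rw [← I5 hε1 M]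
            apply mul_le_mul_of_nonneg_left _ (by norm_num)
            exact Real.rpow_le_rpow (le_of_lt (hρpos M)) hM1 (by linarith)
    have hsumB : ∑ t ∈ T.filter (fun t => ¬ t ≤ M), (aw ε t)^2 * (Qg t x y + Qk t x y)
        ≤ (24/ε) * (dist x y)^(2-2*ε) := by
      have hr2 : 1 < (2:ℝ)^(ε/(1-ε)) := I4 hε0 hε1
      have hratnn : 0 ≤ (2:ℝ)^(ε/(1-ε)) / ((2:ℝ)^(ε/(1-ε)) - 1) :=
        div_nonneg (by linarith) (by linarith)
      calc ∑ t ∈ T.filter (fun t => ¬ t ≤ M), (aw ε t)^2 * (Qg t x y + Qk t x y)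
          ≤ ∑ t ∈ T.filter (fun t => ¬ t ≤ M), 4 * (dist x y)^2 * ((2:ℝ)^(ε/(1-ε)))^(-t) :=
            Finset.sum_le_sum hperB
        _ = 4 * (dist x y)^2 * ∑ t ∈ T.filter (fun t => ¬ t ≤ M), ((2:ℝ)^(ε/(1-ε)))^(-t) := by
            rw [Finset.mul_sum]
        _ ≤ 4 * (dist x y)^2 *
              (((2:ℝ)^(ε/(1-ε)))^(-(M+1)) * ((2:ℝ)^(ε/(1-ε)) / ((2:ℝ)^(ε/(1-ε)) - 1))) := by
            apply mul_le_mul_of_nonneg_left _ (by positivity)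
            exact sum_zpow_neg_le_of_ge hr2 _ (M+1)
              (fun t ht => by have := (Finset.mem_filter.mp ht).2; omega)
        _ ≤ 4 * (dist x y)^2 * ((dist x y)^(-(2*ε)) * (6/ε)) := by
            apply mul_le_mul_of_nonneg_left _ (by positivity)
            exact mul_le_mul (I6 hε0 hε1 hd (le_of_lt hM2)) (ratio_bound hε0 hε1)
              hratnn (Real.rpow_nonneg dist_nonneg _)
        _ = 24/ε * ((dist x y)^(2:ℝ) * (dist x y)^(-(2*ε))) := by
            rw [← Real.rpow_natCast (dist x y) 2]
            push_cast
            ring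
        _ = 24/ε * (dist x y)^(2-2*ε) := by
            rw [← Real.rpow_add hd]
            congr 1
    have htot : ‖Φ0 x - Φ0 y‖^2 ≤ (56/ε) * (dist x y)^(2-2*ε) := by
      rw [hnormsq x y, ← Finset.sum_filter_add_sum_filter_not T (fun t => t ≤ M)]
      have h32 : (32:ℝ) ≤ 32/ε := by
        rw [le_div_iff₀ hε0]; nlinarith
      have hrp : (0:ℝ) ≤ (dist x y)^(2-2*ε) := Real.rpow_nonneg dist_nonneg _
      have h1 : 32 * (dist x y)^(2-2*ε) ≤ 32/ε * (dist x y)^(2-2*ε) :=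
        mul_le_mul_of_nonneg_right h32 hrp
      have e : 32/ε * (dist x y)^(2-2*ε) + 24/ε * (dist x y)^(2-2*ε)
          = 56/ε * (dist x y)^(2-2*ε) := by ring
      linarith
    apply le_of_sq_le_sq (by positivity)
    have e : ((8/Real.sqrt ε) * dist x y^(1-ε))^2 = 64/ε * (dist x y)^(2-2*ε) := by
      rw [mul_pow, div_pow, Real.sq_sqrt (le_of_lt hε0)]
      congr 1
      · norm_num
      · rw [← Real.rpow_natCast (dist x y ^ (1-ε)) 2, ← Real.rpow_mul dist_nonneg]
        congr 1
        push_cast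
        ring
    rw [e]
    have h56 : (56:ℝ)/ε ≤ 64/ε := by gcongr; norm_num
    have hrp : (0:ℝ) ≤ (dist x y)^(2-2*ε) := Real.rpow_nonneg dist_nonneg _
    nlinarith [mul_le_mul_of_nonneg_right h56 hrp]
  -- lower bound
  have lower : ∀ x y : X, x ≠ y → (δ/3) * dist x y^(1-ε) ≤ ‖Φ0 x - Φ0 y‖ := by
    intro x y hxy
    have hd : 0 < dist x y := dist_pos.mpr hxy
    have hsp1 : (Lam ε)^(τ x y) ≤ dist x y / 2 := hτ1 x y hd
    have hsp2 : dist x y / 2 < (Lam ε)^(τ x y + 1) := hτ2 x y hd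
    have hρ := hρpos (τ x y)
    have hsep : ∀ i, y ∉ c (τ x y) i x := by
      intro i hy
      have h1 : dist x y ≤ Metric.diam (c (τ x y) i x) :=
        Metric.dist_le_diam_of_mem (Set.toFinite _).isBounded (hmem (τ x y) i x) hy
      have h2 := hdiam (τ x y) i x
      linarith
    have hQlow : (δ * (Lam ε)^(τ x y))^2 ≤ Qg (τ x y) x y + Qk (τ x y) x y := by
      by_cases hrel : Rel ((Lam ε)^(τ x y)) x y
      · have h1 : (δ*(Lam ε)^(τ x y))^2 ≤ Qg (τ x y) x y := by
          simp only [hQgdef]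
          exact gsum_lower x₀ _ _ _ (hw0 _) (hw1 _) hρ (hmem _) (hpart _) hsep hrel
            (fun i => hdiam _ i x) (le_of_lt hδ0) (hpad _ x)
        linarith [hQknn (τ x y) x y]
      · have h1 : Qk (τ x y) x y = 2*((Lam ε)^(τ x y))^2 := by
          simp only [hQkdef]
          rw [ksum_eq, if_neg hrel]
        have hδsq : δ^2 ≤ 1 := by nlinarith
        have h2 : (δ*(Lam ε)^(τ x y))^2 ≤ 2*((Lam ε)^(τ x y))^2 := by
          nlinarith [mul_pos hρ hρ, sq_nonneg ((Lam ε)^(τ x y))]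
        linarith [hQgnn (τ x y) x y]
    have hsingle : (aw ε (τ x y))^2 * (Qg (τ x y) x y + Qk (τ x y) x y) ≤ ‖Φ0 x - Φ0 y‖^2 := by
      rw [hnormsq x y]
      exact Finset.single_le_sum (f := fun t => (aw ε t)^2 * (Qg t x y + Qk t x y))
        (fun t _ => by
          have h1 := hQgnn t x y; have h2 := hQknn t x y; positivity) (hτT x y)
    have hlow2 : (δ * ((Lam ε)^(τ x y))^(1-ε))^2 ≤ ‖Φ0 x - Φ0 y‖^2 := by
      have e : (δ * ((Lam ε)^(τ x y))^(1-ε))^2 = (aw ε (τ x y))^2 * (δ*(Lam ε)^(τ x y))^2 := by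
        rw [← I2 hε1 (τ x y)]
        ring
      rw [e]
      have h3 := mul_le_mul_of_nonneg_left hQlow (sq_nonneg (aw ε (τ x y)))
      linarith
    have hlow3 : δ * ((Lam ε)^(τ x y))^(1-ε) ≤ ‖Φ0 x - Φ0 y‖ :=
      le_of_sq_le_sq (norm_nonneg _) hlow2
    have hscale : dist x y^(1-ε) ≤ 3 * ((Lam ε)^(τ x y))^(1-ε) := by
      apply lower_scale hε0 hε1 hd hρ
      have e : (Lam ε)^(τ x y + 1) = (Lam ε)^(τ x y) * Lam ε := by
        rw [zpow_add_one₀ (ne_of_gt hΛ0)]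
      rw [e] at hsp2
      rw [div_le_iff₀ (by positivity)]
      nlinarith
    calc δ/3 * dist x y^(1-ε) ≤ δ/3 * (3*((Lam ε)^(τ x y))^(1-ε)) :=
          mul_le_mul_of_nonneg_left hscale (by positivity)
      _ = δ * ((Lam ε)^(τ x y))^(1-ε) := by ring
      _ ≤ ‖Φ0 x - Φ0 y‖ := hlow3
  -- conclusion
  refine ⟨EuclideanSpace ℝ J, inferInstance, inferInstance, inferInstance,
    fun x => (3/δ) • Φ0 x, ?_⟩
  intro x y
  have hnorm3 : ‖(3/δ) • Φ0 x - (3/δ) • Φ0 y‖ = (3/δ) * ‖Φ0 x - Φ0 y‖ := by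
    rw [← smul_sub, norm_smul, Real.norm_eq_abs, abs_of_nonneg (by positivity)]
  by_cases hxy : x = y
  · subst hxy
    rw [dist_self, Real.zero_rpow (ne_of_gt hα)]
    constructor
    · simpa using norm_nonneg _
    · simp
  constructor
  · rw [hnorm3]
    have h := lower x y hxy
    calc dist x y^(1-ε) = (3/δ) * ((δ/3) * dist x y^(1-ε)) := by field_simp
      _ ≤ (3/δ) * ‖Φ0 x - Φ0 y‖ := mul_le_mul_of_nonneg_left h (by positivity)
  · rw [hnorm3]
    have h := upper x y hxy
    calc (3/δ) * ‖Φ0 x - Φ0 y‖ ≤ (3/δ)*((8/Real.sqrt ε)*dist x y^(1-ε)) :=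
        mul_le_mul_of_nonneg_left h (by positivity)
      _ = 24/(δ*Real.sqrt ε) * dist x y^(1-ε) := by
          rw [← mul_assoc, div_mul_div_comm]
          norm_num


end Snowflake15


open Snowflake15 in
/-- (Snowflake embeddings of decomposable metrics.)  There is a
universal constant `C > 0` with the following property.  Let `(X, d)` be a finite metric
space and `δ ∈ (0,1]` be such that for every `ρ > 0` there is a finitely supported
probability distribution (finitely many partitions `c i`, encoded by the map sending a
point to its block, with weights `wt i`) over partitions of `X` into blocks of diameter
at most `ρ` with `E[d(x, X ∖ C(x))] ≥ δρ` for every `x` (where `d(x, ∅) := ρ`).  Then for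
every `0 < ε < 1` the `(1-ε)`-snowflake of `X` embeds into a Hilbert space with distortion
at most `C/(δ√ε)`: there is `Φ : X → H` with
`d(x,y)^{1-ε} ≤ ‖Φ x - Φ y‖ ≤ (C/(δ√ε)) d(x,y)^{1-ε}`. -/
theorem stmt_15 :
    ∃ C : ℝ, 0 < C ∧
      ∀ (X : Type) (_ : MetricSpace X) (_ : Fintype X) (δ : ℝ), 0 < δ → δ ≤ 1 →
      (∀ ρ : ℝ, 0 < ρ →
        ∃ (ι : Type) (_ : Fintype ι) (wt : ι → ℝ) (c : ι → X → Set X),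
          (∀ i, 0 ≤ wt i) ∧ (∑ i, wt i) = 1 ∧
          (∀ i x, x ∈ c i x) ∧
          (∀ i x y, y ∈ c i x → c i y = c i x) ∧
          (∀ i x, Metric.diam (c i x) ≤ ρ) ∧
          (∀ x : X,
            δ * ρ ≤ ∑ i, wt i * (if (c i x)ᶜ = ∅ then ρ else Metric.infDist x (c i x)ᶜ))) →
      ∀ ε : ℝ, 0 < ε → ε < 1 →
      ∃ (H : Type) (_ : NormedAddCommGroup H) (_ : InnerProductSpace ℝ H)
        (_ : CompleteSpace H) (Φ : X → H),
        ∀ x y : X,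
          dist x y ^ (1 - ε) ≤ ‖Φ x - Φ y‖ ∧
          ‖Φ x - Φ y‖ ≤ (C / (δ * Real.sqrt ε)) * dist x y ^ (1 - ε) := by
  refine ⟨24, by norm_num, ?_⟩
  intro X _inst _fin δ hδ0 hδ1 hdec ε hε0 hε1
  rcases isEmpty_or_nonempty X with hX | hX
  · exact ⟨ℝ, inferInstance, inferInstance, inferInstance, fun _ => 0,
      fun x y => isEmptyElim x⟩
  · obtain ⟨x₀⟩ := hX
    choose ι fι wt c hw0 hw1 hmem hpart hdiam hpad using
      fun t : ℤ => hdec ((Lam ε)^t) (Lam_zpow_pos t)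
    exact @Snowflake15.main X _inst _fin x₀ δ ε hδ0 hδ1 hε0 hε1 ι fι wt c
      hw0 hw1 hmem hpart hdiam hpad
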